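/- Let F, G : Ω → ℂᴺ be holomorphic maps on a connected open set Ω ⊆ ℂⁿ containing 0 such that ‖F(z)‖² = ‖G(z)‖² for all z ∈ Ω. Then there exists a unitary transformation U of ℂᴺ with F = U ∘ G on Ω. -/

import Mathlib

noncomputable section
open Metric Set

/-- An automorphism of the unit ball of `EuclideanSpace ℂ ι`: a holomorphic self-map of the
ball with a holomorphic inverse. -/
def IsBallAut {ι : Type} [Fintype ι] (ψ : EuclideanSpace ℂ ι → EuclideanSpace ℂ ι) : Prop :=
  DifferentiableOn ℂ ψ (ball (0 : EuclideanSpace ℂ ι) 1) ∧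
    MapsTo ψ (ball (0 : EuclideanSpace ℂ ι) 1) (ball (0 : EuclideanSpace ℂ ι) 1) ∧
    ∃ φ : EuclideanSpace ℂ ι → EuclideanSpace ℂ ι,
      DifferentiableOn ℂ φ (ball (0 : EuclideanSpace ℂ ι) 1) ∧
      MapsTo φ (ball (0 : EuclideanSpace ℂ ι) 1) (ball (0 : EuclideanSpace ℂ ι) 1) ∧
      (∀ z ∈ ball (0 : EuclideanSpace ℂ ι) 1, φ (ψ z) = z) ∧
      (∀ z ∈ ball (0 : EuclideanSpace ℂ ι) 1, ψ (φ z) = z)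



section DAngeloAux
open Complex Filter Submodule

section Helpers
variable {ι : Type} [Fintype ι]

def cnj : EuclideanSpace ℂ ι ≃ₗᵢ[ℝ] EuclideanSpace ℂ ι :=
  LinearIsometryEquiv.piLpCongrRight 2 (fun _ : ι => Complex.conjLIE)

lemma cnj_apply (w : EuclideanSpace ℂ ι) (i : ι) : (cnj w) i = starRingEnd ℂ (w i) := rfl

lemma cnj_cnj (w : EuclideanSpace ℂ ι) : cnj (cnj w) = w := by
  ext i; simp [cnj_apply]

lemma cnj_smul (w : EuclideanSpace ℂ ι) (a : ℂ) : cnj (a • w) = (starRingEnd ℂ a) • cnj w := by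
  ext i
  show starRingEnd ℂ ((a • w) i) = ((starRingEnd ℂ a) • cnj w) i
  have h1 : (a • w) i = a * w i := rfl
  have h2 : ((starRingEnd ℂ a) • cnj w) i = starRingEnd ℂ a * starRingEnd ℂ (w i) := rfl
  rw [h1, h2, map_mul]

lemma euclidean_coord_le_norm (x : EuclideanSpace ℂ ι) (i : ι) : ‖x i‖ ≤ ‖x‖ := by
  rw [EuclideanSpace.norm_eq]
  have h1 : ‖x i‖ ^ 2 ≤ ∑ j, ‖x j‖ ^ 2 :=
    Finset.single_le_sum (f := fun j => ‖x j‖ ^ 2) (fun j _ => by positivity) (Finset.mem_univ i)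
  calc ‖x i‖ = Real.sqrt (‖x i‖ ^ 2) := by rw [Real.sqrt_sq (norm_nonneg _)]
  _ ≤ _ := Real.sqrt_le_sqrt h1

lemma sum_mul_conj_self (x : EuclideanSpace ℂ ι) :
    ∑ j, x j * starRingEnd ℂ (x j) = (‖x‖ ^ 2 : ℝ) := by
  have h1 : ∀ j, x j * starRingEnd ℂ (x j) = ((‖x j‖ ^ 2 : ℝ) : ℂ) := by
    intro j
    rw [Complex.mul_conj]
    norm_cast
    rw [Complex.normSq_eq_norm_sq]
  rw [Finset.sum_congr rfl (fun j _ => h1 j), ← Complex.ofReal_sum]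
  norm_cast
  rw [EuclideanSpace.norm_eq, Real.sq_sqrt (by positivity)]

end Helpers

-- one-variable identity theorem, eventually version
lemma oneVar_eventually {f : ℂ → ℂ} {s : Set ℂ} (hs : IsOpen s) (hconn : IsPreconnected s)
    (hf : DifferentiableOn ℂ f s) {z₀ : ℂ} (h₀ : z₀ ∈ s) (hz : ∀ᶠ z in nhds z₀, f z = 0) :
    ∀ z ∈ s, f z = 0 := by
  have := (hf.analyticOnNhd hs).eqOn_zero_of_preconnected_of_eventuallyEq_zero hconn h₀ hz
  exact fun z hzs => this hzs

-- one variable: vanishing on the reals near 0 implies vanishing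
lemma oneVar_real {f : ℂ → ℂ} {R : ℝ} (hR : 0 < R) (hf : DifferentiableOn ℂ f (ball 0 R))
    (h : ∀ t : ℝ, |t| < R → f t = 0) : ∀ z ∈ ball (0 : ℂ) R, f z = 0 := by
  have hfreq : ∃ᶠ z in nhdsWithin (0:ℂ) {(0:ℂ)}ᶜ, f z = 0 := by
    rw [Filter.frequently_iff]
    intro U hU
    rcases Metric.mem_nhdsWithin_iff.1 hU with ⟨ε, hε, hsub⟩
    refine ⟨((min ε R) / 2 : ℝ), hsub ⟨?_, ?_⟩, ?_⟩
    · simp only [mem_ball, dist_zero_right]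
      rw [Complex.norm_real]
      rw [Real.norm_eq_abs, abs_of_pos (by positivity)]
      have := lt_min hε hR
      have h2 : min ε R ≤ ε := min_le_left _ _
      linarith
    · simp only [mem_compl_iff, mem_singleton_iff]
      exact_mod_cast (by positivity : (0:ℝ) < min ε R / 2).ne'
    · refine h _ ?_
      rw [abs_of_pos (by positivity)]
      have := lt_min hε hR
      have h2 : min ε R ≤ R := min_le_right _ _
      linarith
  have := ((hf.analyticOnNhd isOpen_ball).eqOn_zero_of_preconnected_of_frequently_eq_zero
    (convex_ball (0:ℂ) R).isPreconnected (mem_ball_self hR) hfreq)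
  exact fun z hz => this hz

/-- Identity theorem in a complex normed space via restriction to complex lines. -/
lemma severalVar_eqOn_zero {E : Type*} [NormedAddCommGroup E] [NormedSpace ℂ E]
    {f : E → ℂ} {U : Set E} (hU : IsOpen U) (hconn : IsPreconnected U)
    (hf : DifferentiableOn ℂ f U) {x₀ : E} (h₀ : x₀ ∈ U)
    (h0 : ∀ᶠ x in nhds x₀, f x = 0) : ∀ x ∈ U, f x = 0 := by
  set W : Set E := {x | ∀ᶠ y in nhds x, f y = 0} with hW
  have main : closure W ∩ U ⊆ W := by
    rintro x ⟨hxW, hxU⟩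
    rcases Metric.isOpen_iff.1 hU x hxU with ⟨r, hr, hball⟩
    rcases Metric.mem_closure_iff.1 hxW (r/4) (by linarith) with ⟨y, hyW, hxy⟩
    -- f vanishes on ball y (r/2)
    have hvan : ∀ p ∈ ball y (r/2), f p = 0 := by
      intro p hp
      rcases eq_or_ne p y with rfl | hne
      · exact hyW.self_of_nhds
      have hpy : (0:ℝ) < ‖p - y‖ := by
        rwa [norm_pos_iff, sub_ne_zero]
      set T : ℝ := r / (2 * ‖p - y‖) with hT
      have hT1 : 1 < T := by
        rw [hT, lt_div_iff₀ (by positivity)]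
        have : ‖p - y‖ < r/2 := by rwa [mem_ball, dist_eq_norm] at hp
        linarith
      -- the affine line
      set ℓ : ℂ → E := fun lam => y + lam • (p - y) with hℓ
      have hmaps : ∀ lam ∈ ball (0:ℂ) T, ℓ lam ∈ U := by
        intro lam hlam
        apply hball
        rw [mem_ball, dist_eq_norm] at hlam ⊢
        simp only [sub_zero] at hlam
        have heq : ℓ lam - x = (y - x) + lam • (p - y) := by rw [hℓ]; show y + lam • (p - y) - x = (y - x) + lam • (p - y); abel
        have h1 : ‖ℓ lam - x‖ ≤ ‖y - x‖ + ‖lam • (p - y)‖ := by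
          rw [heq]; exact norm_add_le _ _
        have h2 : ‖lam • (p - y)‖ < r * (3/4) := by
          rw [norm_smul]
          calc ‖lam‖ * ‖p - y‖ < T * ‖p - y‖ := by
                exact mul_lt_mul_of_pos_right hlam hpy
          _ = r / 2 := by rw [hT]; field_simp
          _ < r * (3/4) := by linarith
        have h3 : ‖y - x‖ < r/4 := by
          rw [← dist_eq_norm, dist_comm]; exact hxy
        linarith
      have hg : DifferentiableOn ℂ (f ∘ ℓ) (ball (0:ℂ) T) := by
        apply hf.comp
        · intro lam hlam
          apply DifferentiableAt.differentiableWithinAt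
          exact (differentiableAt_const y).add ((differentiableAt_id).smul_const (p - y))
        · exact hmaps
      have hg0 : ∀ᶠ lam in nhds (0:ℂ), (f ∘ ℓ) lam = 0 := by
        rcases Metric.eventually_nhds_iff.1 hyW with ⟨δ, hδ, hδf⟩
        rw [Metric.eventually_nhds_iff]
        refine ⟨δ / ‖p - y‖, by positivity, ?_⟩
        intro lam hlam
        apply hδf
        rw [dist_zero_right] at hlam
        rw [hℓ]
        rw [dist_eq_norm, add_sub_cancel_left, norm_smul]
        calc ‖lam‖ * ‖p - y‖ < δ / ‖p - y‖ * ‖p - y‖ := mul_lt_mul_of_pos_right hlam hpy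
        _ = δ := by field_simp
      have := oneVar_eventually isOpen_ball (convex_ball (0:ℂ) T).isPreconnected hg
        (mem_ball_self (by linarith)) hg0 1 (by rw [mem_ball, dist_zero_right]; simpa using hT1)
      simpa [hℓ] using this
    -- hence x ∈ W
    have : ball y (r/2) ∈ nhds x := by
      apply isOpen_ball.mem_nhds
      rw [mem_ball]
      exact lt_trans hxy (by linarith)
    exact Filter.eventually_of_mem this hvan
  have Uu : U ⊆ W :=
    hconn.subset_of_closure_inter_subset (isOpen_setOf_eventually_nhds) ⟨x₀, h₀, h0⟩ main
  exact fun z hz => (Uu hz).self_of_nhds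

/-- A holomorphic function on a polydisc vanishing on real points vanishes. -/
lemma realPoints_eqOn_zero {ι : Type} [Fintype ι] [DecidableEq ι] {f : (ι → ℂ) → ℂ} {r : ℝ} (hr : 0 < r)
    (hf : DifferentiableOn ℂ f (ball 0 r))
    (h0 : ∀ x : ι → ℂ, x ∈ ball (0 : ι → ℂ) r → (∀ i, (x i).im = 0) → f x = 0) :
    ∀ x ∈ ball (0 : ι → ℂ) r, f x = 0 := by
  have key : ∀ s : Finset ι, ∀ x : ι → ℂ, x ∈ ball (0 : ι → ℂ) r →
      (∀ i ∉ s, (x i).im = 0) → f x = 0 := by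
    intro s
    induction s using Finset.induction_on with
    | empty => exact fun x hx hreal => h0 x hx (fun i => hreal i (Finset.notMem_empty i))
    | @insert a s ha IH =>
      intro x hx hreal
      rw [mem_ball, dist_zero_right] at hx
      set g : ℂ → ℂ := fun lam => f (Function.update x a lam) with hg
      have hupd : ∀ lam : ℂ, ‖lam‖ < r → Function.update x a lam ∈ ball (0 : ι → ℂ) r := by
        intro lam hlam
        rw [mem_ball, dist_zero_right]
        refine lt_of_le_of_lt (pi_norm_le_iff_of_nonneg (le_max_left ‖x‖ ‖lam‖ |>.trans' (norm_nonneg _)) |>.2 ?_) ?_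
        · intro i
          rcases eq_or_ne i a with rfl | hne
          · simp [Function.update_self]
          · rw [Function.update_of_ne hne]
            exact (norm_le_pi_norm x i).trans (le_max_left _ _)
        · exact max_lt hx hlam
      have hgdiff : DifferentiableOn ℂ g (ball (0:ℂ) r) := by
        have haff : Differentiable ℂ (fun lam : ℂ => Function.update x a lam) := by
          have : (fun lam : ℂ => Function.update x a lam)
              = fun lam : ℂ => x + (lam - x a) • (Pi.single a 1 : ι → ℂ) := by
            funext lam
            funext i
            rcases eq_or_ne i a with rfl | hne
            · simp [Function.update_self]
            · simp [Function.update_of_ne hne, Pi.single_eq_of_ne hne]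
          rw [this]
          exact (differentiable_const x).add
            (((differentiable_id).sub_const (x a)).smul_const _)
        apply hf.comp haff.differentiableOn
        intro lam hlam
        rw [mem_ball, dist_zero_right] at hlam
        exact hupd lam hlam
      have hgreal : ∀ t : ℝ, |t| < r → g t = 0 := by
        intro t ht
        apply IH
        · exact hupd t (by rwa [Complex.norm_real, Real.norm_eq_abs])
        · intro i hi
          rcases eq_or_ne i a with rfl | hne
          · simp [Function.update_self]
          · rw [Function.update_of_ne hne]
            exact hreal i (by simp [hne, hi])
      have := oneVar_real hr hgdiff hgreal (x a)
        (by rw [mem_ball, dist_zero_right]; exact lt_of_le_of_lt (norm_le_pi_norm x a) hx)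
      simpa [hg, Function.update_eq_self] using this
  intro x hx
  exact key Finset.univ x hx (fun i hi => absurd (Finset.mem_univ i) hi)

lemma conj_comp_differentiableOn {ι : Type} [Fintype ι] {f : EuclideanSpace ℂ ι → ℂ} {U : Set (EuclideanSpace ℂ ι)}
    (hU : IsOpen U) (hf : DifferentiableOn ℂ f U) :
    DifferentiableOn ℂ (fun w => starRingEnd ℂ (f (cnj w))) (cnj ⁻¹' U) := by
  intro w₀ hw₀
  have hw₀' : cnj w₀ ∈ U := hw₀
  have hd : DifferentiableAt ℂ f (cnj w₀) := hf.differentiableAt (hU.mem_nhds hw₀')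
  set L := fderiv ℂ f (cnj w₀) with hLdef
  have hL : HasFDerivAt f L (cnj w₀) := hd.hasFDerivAt
  -- the candidate complex-linear derivative
  set linM : EuclideanSpace ℂ ι →ₗ[ℂ] ℂ :=
    { toFun := fun v => starRingEnd ℂ (L (cnj v))
      map_add' := by intro v w; simp [map_add]
      map_smul' := by
        intro a v
        simp only [cnj_smul, map_smul, smul_eq_mul, map_mul, RingHom.id_apply,
          Complex.conj_conj] } with hlinM
  have hbound : ∀ v, ‖linM v‖ ≤ ‖L‖ * ‖v‖ := by
    intro v
    have : ‖starRingEnd ℂ (L (cnj v))‖ = ‖L (cnj v)‖ := by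
      simp
    rw [hlinM]
    simp only [LinearMap.coe_mk, AddHom.coe_mk]
    rw [this]
    calc ‖L (cnj v)‖ ≤ ‖L‖ * ‖cnj v‖ := L.le_opNorm _
    _ = ‖L‖ * ‖v‖ := by rw [cnj.norm_map]
  set M : EuclideanSpace ℂ ι →L[ℂ] ℂ := linM.mkContinuous ‖L‖ hbound with hM
  -- real-differentiability of the composite
  have h1 : HasFDerivAt f (L.restrictScalars ℝ) (cnj w₀) := hL.restrictScalars ℝ
  have h2 : HasFDerivAt (cnj : EuclideanSpace ℂ ι → EuclideanSpace ℂ ι)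
      ((cnj.toContinuousLinearEquiv : EuclideanSpace ℂ ι ≃L[ℝ] EuclideanSpace ℂ ι) :
        EuclideanSpace ℂ ι →L[ℝ] EuclideanSpace ℂ ι) w₀ := by
    have h := cnj.toContinuousLinearEquiv.hasFDerivAt (x := w₀)
    have hco : ⇑(cnj.toContinuousLinearEquiv) = ⇑(cnj : EuclideanSpace ℂ ι ≃ₗᵢ[ℝ] EuclideanSpace ℂ ι) := by
      funext v; rfl
    rwa [hco] at h
  have h3 : HasFDerivAt (starRingEnd ℂ : ℂ → ℂ)
      ((Complex.conjCLE : ℂ ≃L[ℝ] ℂ) : ℂ →L[ℝ] ℂ) (f (cnj w₀)) := by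
    have := Complex.conjCLE.hasFDerivAt (x := f (cnj w₀))
    exact this
  have hcomp : HasFDerivAt (fun w => starRingEnd ℂ (f (cnj w)))
      (((Complex.conjCLE : ℂ ≃L[ℝ] ℂ) : ℂ →L[ℝ] ℂ).comp
        ((L.restrictScalars ℝ).comp
          ((cnj.toContinuousLinearEquiv : EuclideanSpace ℂ ι ≃L[ℝ] EuclideanSpace ℂ ι) :
            EuclideanSpace ℂ ι →L[ℝ] EuclideanSpace ℂ ι))) w₀ :=
    h3.comp w₀ (h1.comp w₀ h2)
  have hM' : HasFDerivAt (fun w => starRingEnd ℂ (f (cnj w))) M w₀ := by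
    apply hasFDerivAt_of_restrictScalars ℝ hcomp
    ext v
    rfl
  exact hM'.differentiableAt.differentiableWithinAt

section Core
variable {n N : ℕ}

/-- The polarized difference function. -/
def Phi (F G : EuclideanSpace ℂ (Fin n) → EuclideanSpace ℂ (Fin N))
    (p : EuclideanSpace ℂ (Fin n) × EuclideanSpace ℂ (Fin n)) : ℂ :=
  (∑ j, (F p.1 j) * starRingEnd ℂ (F (cnj p.2) j)) -
    (∑ j, (G p.1 j) * starRingEnd ℂ (G (cnj p.2) j))

variable {Ω : Set (EuclideanSpace ℂ (Fin n))}
  {F G : EuclideanSpace ℂ (Fin n) → EuclideanSpace ℂ (Fin N)}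

lemma Phi_differentiableOn (hΩopen : IsOpen Ω)
    (hF : DifferentiableOn ℂ F Ω) (hG : DifferentiableOn ℂ G Ω) :
    DifferentiableOn ℂ (Phi F G) (Ω ×ˢ (cnj ⁻¹' Ω)) := by
  have hfst : DifferentiableOn ℂ (fun p : EuclideanSpace ℂ (Fin n) × EuclideanSpace ℂ (Fin n) => p.1)
      (Ω ×ˢ (cnj ⁻¹' Ω)) := differentiable_fst.differentiableOn
  have term : ∀ (H : EuclideanSpace ℂ (Fin n) → EuclideanSpace ℂ (Fin N)),
      DifferentiableOn ℂ H Ω → ∀ j : Fin N,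
      DifferentiableOn ℂ (fun p : EuclideanSpace ℂ (Fin n) × EuclideanSpace ℂ (Fin n) =>
        (H p.1 j) * starRingEnd ℂ (H (cnj p.2) j)) (Ω ×ˢ (cnj ⁻¹' Ω)) := by
    intro H hH j
    have hHj : DifferentiableOn ℂ (fun z => H z j) Ω := by
      have := ((EuclideanSpace.proj j : EuclideanSpace ℂ (Fin N) →L[ℂ] ℂ)).differentiable.comp_differentiableOn hH
      exact this
    have h1 : DifferentiableOn ℂ (fun p : EuclideanSpace ℂ (Fin n) × EuclideanSpace ℂ (Fin n) =>
        H p.1 j) (Ω ×ˢ (cnj ⁻¹' Ω)) :=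
      hHj.comp differentiable_fst.differentiableOn (fun p hp => hp.1)
    have h2 : DifferentiableOn ℂ (fun w => starRingEnd ℂ (H (cnj w) j)) (cnj ⁻¹' Ω) :=
      conj_comp_differentiableOn hΩopen hHj
    have h3 : DifferentiableOn ℂ (fun p : EuclideanSpace ℂ (Fin n) × EuclideanSpace ℂ (Fin n) =>
        starRingEnd ℂ (H (cnj p.2) j)) (Ω ×ˢ (cnj ⁻¹' Ω)) :=
      h2.comp differentiable_snd.differentiableOn (fun p hp => hp.2)
    exact h1.mul h3
  exact DifferentiableOn.sub
    (DifferentiableOn.fun_sum (fun j _ => term F hF j))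
    (DifferentiableOn.fun_sum (fun j _ => term G hG j))

lemma Phi_diag (hnorm : ∀ z ∈ Ω, ‖F z‖ ^ 2 = ‖G z‖ ^ 2) {z : EuclideanSpace ℂ (Fin n)}
    (hz : z ∈ Ω) : Phi F G (z, cnj z) = 0 := by
  unfold Phi
  simp only [cnj_cnj]
  rw [sum_mul_conj_self (F z), sum_mul_conj_self (G z), hnorm z hz]
  ring
end Core

section C3
variable {n N : ℕ} {Ω : Set (EuclideanSpace ℂ (Fin n))}
  {F G : EuclideanSpace ℂ (Fin n) → EuclideanSpace ℂ (Fin N)}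

lemma Phi_local_zero (hΩopen : IsOpen Ω)
    (hF : DifferentiableOn ℂ F Ω) (hG : DifferentiableOn ℂ G Ω)
    (hnorm : ∀ z ∈ Ω, ‖F z‖ ^ 2 = ‖G z‖ ^ 2) {z₀ : EuclideanSpace ℂ (Fin n)} (hz₀ : z₀ ∈ Ω) :
    ∃ ε > 0, ∀ z w, dist z z₀ < ε → dist w (cnj z₀) < ε → Phi F G (z, w) = 0 := by
  classical
  set ee : (Fin n → ℂ) ≃L[ℂ] EuclideanSpace ℂ (Fin n) :=
    (PiLp.continuousLinearEquiv 2 ℂ (fun _ : Fin n => ℂ)).symm with hee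
  set P : (Fin n ⊕ Fin n → ℂ) → EuclideanSpace ℂ (Fin n) :=
    fun x => ee (fun i => x (Sum.inl i) + Complex.I * x (Sum.inr i)) with hP
  set Q : (Fin n ⊕ Fin n → ℂ) → EuclideanSpace ℂ (Fin n) :=
    fun x => ee (fun i => x (Sum.inl i) - Complex.I * x (Sum.inr i)) with hQ
  have hPapp : ∀ x i, P x i = x (Sum.inl i) + Complex.I * x (Sum.inr i) := fun x i => rfl
  have hQapp : ∀ x i, Q x i = x (Sum.inl i) - Complex.I * x (Sum.inr i) := fun x i => rfl
  have hcoord : ∀ j : Fin n ⊕ Fin n, Differentiable ℂ (fun x : Fin n ⊕ Fin n → ℂ => x j) := by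
    intro j
    have := (ContinuousLinearMap.proj (R := ℂ) (φ := fun _ : Fin n ⊕ Fin n => ℂ) j).differentiable
    exact this
  have hPdiff : Differentiable ℂ P := by
    apply ee.differentiable.comp
    apply differentiable_pi''
    intro i
    exact (hcoord (Sum.inl i)).add ((differentiable_const _).mul (hcoord (Sum.inr i)))
  have hQdiff : Differentiable ℂ Q := by
    apply ee.differentiable.comp
    apply differentiable_pi''
    intro i
    exact (hcoord (Sum.inl i)).sub ((differentiable_const _).mul (hcoord (Sum.inr i)))
  set T : (Fin n ⊕ Fin n → ℂ) → EuclideanSpace ℂ (Fin n) × EuclideanSpace ℂ (Fin n) :=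
    fun x => (z₀ + P x, cnj z₀ + Q x) with hT
  have hTdiff : Differentiable ℂ T :=
    ((differentiable_const z₀).add hPdiff).prodMk ((differentiable_const (cnj z₀)).add hQdiff)
  have hT0 : T 0 = (z₀, cnj z₀) := by
    rw [hT]
    have hP0 : P 0 = 0 := by
      ext i
      simp [hPapp]
    have hQ0 : Q 0 = 0 := by
      ext i
      simp [hQapp]
    simp [hP0, hQ0]
  have hopen : IsOpen (T ⁻¹' (Ω ×ˢ (cnj ⁻¹' Ω))) :=
    (hΩopen.prod (hΩopen.preimage cnj.continuous)).preimage hTdiff.continuous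
  have hmem0 : (0 : Fin n ⊕ Fin n → ℂ) ∈ T ⁻¹' (Ω ×ˢ (cnj ⁻¹' Ω)) := by
    rw [Set.mem_preimage, hT0]
    exact ⟨hz₀, by simp [cnj_cnj]; exact hz₀⟩
  obtain ⟨r, hr, hrsub⟩ := Metric.isOpen_iff.1 hopen 0 hmem0
  set H : (Fin n ⊕ Fin n → ℂ) → ℂ := Phi F G ∘ T with hH
  have hHdiff : DifferentiableOn ℂ H (ball 0 r) := by
    apply (Phi_differentiableOn hΩopen hF hG).comp hTdiff.differentiableOn
    intro x hx
    exact hrsub hx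
  have hHreal : ∀ x : Fin n ⊕ Fin n → ℂ, x ∈ ball (0 : Fin n ⊕ Fin n → ℂ) r →
      (∀ j, (x j).im = 0) → H x = 0 := by
    intro x hx hxreal
    have hre : ∀ j, starRingEnd ℂ (x j) = x j := fun j => Complex.conj_eq_iff_im.mpr (hxreal j)
    have hmem : T x ∈ Ω ×ˢ (cnj ⁻¹' Ω) := hrsub hx
    have hzΩ : z₀ + P x ∈ Ω := hmem.1
    have hw : cnj (z₀ + P x) = cnj z₀ + Q x := by
      ext i
      show starRingEnd ℂ ((z₀ + P x) i) = (cnj z₀ + Q x) i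
      have h1 : (z₀ + P x) i = z₀ i + P x i := rfl
      have h2 : (cnj z₀ + Q x) i = starRingEnd ℂ (z₀ i) + Q x i := rfl
      rw [h1, h2, hPapp, hQapp, map_add, map_add, map_mul, Complex.conj_I,
        hre (Sum.inl i), hre (Sum.inr i)]
      ring
    have : H x = Phi F G (z₀ + P x, cnj (z₀ + P x)) := by rw [hH]; simp [hT, hw]
    rw [this]
    exact Phi_diag hnorm hzΩ
  have hHzero := realPoints_eqOn_zero hr hHdiff hHreal
  refine ⟨r / 2, by positivity, ?_⟩
  intro z w hzd hwd
  set a : EuclideanSpace ℂ (Fin n) := z - z₀ with ha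
  set b : EuclideanSpace ℂ (Fin n) := w - cnj z₀ with hb
  set x : Fin n ⊕ Fin n → ℂ :=
    Sum.elim (fun i => (a i + b i) / 2) (fun i => (-Complex.I) * (a i - b i) / 2) with hx
  have hna : ‖a‖ < r / 2 := by rwa [ha, ← dist_eq_norm]
  have hnb : ‖b‖ < r / 2 := by rwa [hb, ← dist_eq_norm]
  have hxball : x ∈ ball (0 : Fin n ⊕ Fin n → ℂ) r := by
    rw [mem_ball, dist_zero_right, pi_norm_lt_iff hr]
    have key : ∀ i : Fin n, ‖a i‖ + ‖b i‖ < r := by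
      intro i
      have h1 := euclidean_coord_le_norm a i
      have h2 := euclidean_coord_le_norm b i
      linarith
    rintro (i | i)
    · show ‖(a i + b i) / 2‖ < r
      rw [norm_div]
      have : ‖a i + b i‖ ≤ ‖a i‖ + ‖b i‖ := norm_add_le _ _
      have h3 : ‖(2 : ℂ)‖ = 2 := by norm_num
      rw [h3]
      have := key i
      linarith
    · show ‖(-Complex.I) * (a i - b i) / 2‖ < r
      rw [norm_div, norm_mul, norm_neg, Complex.norm_I, one_mul]
      have : ‖a i - b i‖ ≤ ‖a i‖ + ‖b i‖ := norm_sub_le _ _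
      have h3 : ‖(2 : ℂ)‖ = 2 := by norm_num
      rw [h3]
      have := key i
      linarith
  have hTx : T x = (z, w) := by
    have h1 : z₀ + P x = z := by
      ext i
      show z₀ i + P x i = z i
      rw [hPapp]
      have hxl : x (Sum.inl i) = (a i + b i) / 2 := rfl
      have hxr : x (Sum.inr i) = (-Complex.I) * (a i - b i) / 2 := rfl
      have hai : a i = z i - z₀ i := rfl
      have hbi : b i = w i - (cnj z₀) i := rfl
      rw [hxl, hxr, hai, hbi]
      have hI := Complex.I_mul_I
      linear_combination (-(z i - z₀ i - (w i - (cnj z₀) i)) / 2) * hI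
    have h2 : cnj z₀ + Q x = w := by
      ext i
      show (cnj z₀) i + Q x i = w i
      rw [hQapp]
      have hxl : x (Sum.inl i) = (a i + b i) / 2 := rfl
      have hxr : x (Sum.inr i) = (-Complex.I) * (a i - b i) / 2 := rfl
      have hai : a i = z i - z₀ i := rfl
      have hbi : b i = w i - (cnj z₀) i := rfl
      rw [hxl, hxr, hai, hbi]
      have hI := Complex.I_mul_I
      linear_combination ((z i - z₀ i - (w i - (cnj z₀) i)) / 2) * hI
    show (z₀ + P x, cnj z₀ + Q x) = (z, w)
    rw [h1, h2]
  have := hHzero x hxball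
  rw [hH] at this
  simp only [Function.comp_apply, hTx] at this
  exact this

end C3

section C4
variable {n N : ℕ} {Ω : Set (EuclideanSpace ℂ (Fin n))}
  {F G : EuclideanSpace ℂ (Fin n) → EuclideanSpace ℂ (Fin N)}

lemma Phi_global (hΩopen : IsOpen Ω) (hΩconn : IsConnected Ω)
    (hF : DifferentiableOn ℂ F Ω) (hG : DifferentiableOn ℂ G Ω)
    (hnorm : ∀ z ∈ Ω, ‖F z‖ ^ 2 = ‖G z‖ ^ 2) :
    ∀ z ∈ Ω, ∀ w ∈ Ω, Phi F G (z, cnj w) = 0 := by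
  set Ω' : Set (EuclideanSpace ℂ (Fin n)) := cnj ⁻¹' Ω with hΩ'
  have hΩ'img : Ω' = (cnj : EuclideanSpace ℂ (Fin n) → EuclideanSpace ℂ (Fin n)) '' Ω := by
    ext u
    constructor
    · intro hu
      exact ⟨cnj u, hu, cnj_cnj u⟩
    · rintro ⟨v, hv, rfl⟩
      show cnj (cnj v) ∈ Ω
      rwa [cnj_cnj]
  have hΩ'open : IsOpen Ω' := hΩopen.preimage cnj.continuous
  have hΩ'conn : IsPreconnected Ω' := by
    rw [hΩ'img]
    exact (hΩconn.image _ cnj.continuous.continuousOn).isPreconnected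
  intro z₁ hz₁ w hw
  set ψ : EuclideanSpace ℂ (Fin n) → ℂ := fun u => Phi F G (z₁, u) with hψ
  have hψdiff : DifferentiableOn ℂ ψ Ω' := by
    apply (Phi_differentiableOn hΩopen hF hG).comp
      ((differentiable_const z₁).prodMk differentiable_id).differentiableOn
    intro u hu
    exact ⟨hz₁, hu⟩
  obtain ⟨ε, hε, hloc⟩ := Phi_local_zero hΩopen hF hG hnorm hz₁
  have hev : ∀ᶠ u in nhds (cnj z₁), ψ u = 0 := by
    rw [Metric.eventually_nhds_iff]
    exact ⟨ε, hε, fun u hu => hloc z₁ u (by simpa using hε) hu⟩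
  have hmem : cnj z₁ ∈ Ω' := by
    show cnj (cnj z₁) ∈ Ω
    rwa [cnj_cnj]
  have hzero := severalVar_eqOn_zero hΩ'open hΩ'conn hψdiff hmem hev
  have hcw : cnj w ∈ Ω' := by
    show cnj (cnj w) ∈ Ω
    rwa [cnj_cnj]
  exact hzero (cnj w) hcw

lemma gram_eq (hΩopen : IsOpen Ω) (hΩconn : IsConnected Ω)
    (hF : DifferentiableOn ℂ F Ω) (hG : DifferentiableOn ℂ G Ω)
    (hnorm : ∀ z ∈ Ω, ‖F z‖ ^ 2 = ‖G z‖ ^ 2) :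
    ∀ z ∈ Ω, ∀ w ∈ Ω, inner ℂ (F z) (F w) = inner ℂ (G z) (G w) := by
  intro z hz w hw
  have h := Phi_global hΩopen hΩconn hF hG hnorm w hw z hz
  unfold Phi at h
  rw [cnj_cnj] at h
  have h' : ∑ j, F w j * starRingEnd ℂ (F z j) = ∑ j, G w j * starRingEnd ℂ (G z j) :=
    sub_eq_zero.mp h
  rw [PiLp.inner_apply, PiLp.inner_apply]
  simp only [RCLike.inner_apply']
  calc ∑ j, starRingEnd ℂ (F z j) * F w j = ∑ j, F w j * starRingEnd ℂ (F z j) := by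
        exact Finset.sum_congr rfl fun j _ => mul_comm _ _
  _ = ∑ j, G w j * starRingEnd ℂ (G z j) := h'
  _ = ∑ j, starRingEnd ℂ (G z j) * G w j := Finset.sum_congr rfl fun j _ => mul_comm _ _

end C4

local notation "⟪" x ", " y "⟫" => @inner ℂ _ _ x y

lemma gram_sum_eq {E : Type*} [NormedAddCommGroup E] [InnerProductSpace ℂ E]
    {κ : Type*} [Fintype κ] (u v : κ → E) (c : κ → ℂ)
    (h : ∀ i j, ⟪u i, u j⟫ = ⟪v i, v j⟫) :
    ⟪∑ i, c i • u i, ∑ j, c j • u j⟫ = ⟪∑ i, c i • v i, ∑ j, c j • v j⟫ := by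
  simp_rw [sum_inner, inner_sum, inner_smul_left, inner_smul_right, h]

lemma comb_zero {E : Type*} [NormedAddCommGroup E] [InnerProductSpace ℂ E]
    {κ : Type*} [Fintype κ] (u v : κ → E) (c : κ → ℂ)
    (h : ∀ i j, ⟪u i, u j⟫ = ⟪v i, v j⟫) (hz : ∑ i, c i • u i = 0) :
    ∑ i, c i • v i = 0 := by
  have hg := gram_sum_eq u v c h
  rw [hz, inner_zero_left] at hg
  exact inner_self_eq_zero.mp hg.symm

theorem exists_isometry_of_gram {n N : ℕ} {Ω : Set (EuclideanSpace ℂ (Fin n))}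
    (F G : EuclideanSpace ℂ (Fin n) → EuclideanSpace ℂ (Fin N))
    (hgram : ∀ z ∈ Ω, ∀ w ∈ Ω, ⟪F z, F w⟫ = ⟪G z, G w⟫) :
    ∃ U : EuclideanSpace ℂ (Fin N) ≃ₗᵢ[ℂ] EuclideanSpace ℂ (Fin N), ∀ z ∈ Ω, F z = U (G z) := by
  classical
  obtain ⟨b, hbsub, hbsp, hbli⟩ := exists_linearIndependent ℂ (G '' Ω)
  set V : Submodule ℂ (EuclideanSpace ℂ (Fin N)) := span ℂ (G '' Ω) with hV
  haveI : Fintype b := (hbli.setFinite).fintype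
  have hrange : range ((↑) : b → EuclideanSpace ℂ (Fin N)) = b := Subtype.range_coe
  set B : Module.Basis b ℂ V :=
    (Module.Basis.span hbli).map (LinearEquiv.ofEq _ _ (by rw [hrange, hbsp])) with hB
  -- choose preimages
  have hmemb : ∀ x : b, (x : EuclideanSpace ℂ (Fin N)) ∈ G '' Ω := fun x => hbsub x.2
  set zc : b → EuclideanSpace ℂ (Fin n) := fun x => (hmemb x).choose with hzc
  have hzcΩ : ∀ x : b, zc x ∈ Ω := fun x => (hmemb x).choose_spec.1
  have hzcG : ∀ x : b, G (zc x) = (x : EuclideanSpace ℂ (Fin N)) := fun x => (hmemb x).choose_spec.2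
  have hBx : ∀ x : b, ((B x : V) : EuclideanSpace ℂ (Fin N)) = G (zc x) := by
    intro x
    rw [hzcG]
    simp [hB, Module.Basis.span_apply]
  set T : V →ₗ[ℂ] EuclideanSpace ℂ (Fin N) := B.constr ℕ (fun x => F (zc x)) with hT
  have Tapp : ∀ y : V, T y = ∑ x, B.repr y x • F (zc x) := by
    intro y
    rw [hT]
    rw [Module.Basis.constr_apply_fintype]
    simp [Module.Basis.equivFun_apply]
  have keyrep : ∀ y : V, (y : EuclideanSpace ℂ (Fin N)) = ∑ x, B.repr y x • G (zc x) := by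
    intro y
    have h1 := congrArg (V.subtype) (B.sum_repr y)
    simp only [map_sum, map_smul, Submodule.subtype_apply, hBx] at h1
    exact h1.symm
  -- T sends ⟨G z, _⟩ to F z
  have hGmem : ∀ z ∈ Ω, G z ∈ V := fun z hz => subset_span ⟨z, hz, rfl⟩
  have WD : ∀ z (hz : z ∈ Ω), T ⟨G z, hGmem z hz⟩ = F z := by
    intro z hz
    set y : V := ⟨G z, hGmem z hz⟩ with hy
    set c : b → ℂ := fun x => B.repr y x with hc
    have hrep : G z = ∑ x, c x • G (zc x) := keyrep y
    -- transfer via Option index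
    set u : Option b → EuclideanSpace ℂ (Fin N) := fun o => o.elim (G z) (fun x => G (zc x)) with hu
    set v : Option b → EuclideanSpace ℂ (Fin N) := fun o => o.elim (F z) (fun x => F (zc x)) with hv
    set d : Option b → ℂ := fun o => o.elim 1 (fun x => -(c x)) with hd
    set pt : Option b → EuclideanSpace ℂ (Fin n) := fun o => o.elim z zc with hpt
    have hptΩ : ∀ o, pt o ∈ Ω := by rintro (_|x); exacts [hz, hzcΩ x]
    have hueq : ∀ o, u o = G (pt o) := by rintro (_|x) <;> rfl
    have hveq : ∀ o, v o = F (pt o) := by rintro (_|x) <;> rfl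
    have hpair : ∀ o o', ⟪u o, u o'⟫ = ⟪v o, v o'⟫ := by
      intro o o'
      rw [hueq, hueq, hveq, hveq]
      exact (hgram (pt o) (hptΩ o) (pt o') (hptΩ o')).symm
    have husum : ∑ o, d o • u o = 0 := by
      rw [Fintype.sum_option]
      show (1:ℂ) • G z + ∑ x, (-(c x)) • G (zc x) = 0
      rw [one_smul]
      simp only [neg_smul]
      rw [Finset.sum_neg_distrib, hrep]
      abel
    have hvsum := comb_zero u v d hpair husum
    rw [Fintype.sum_option] at hvsum
    have hvsum' : F z + -∑ x, c x • F (zc x) = 0 := by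
      rw [← hvsum]
      show _ = (1:ℂ) • F z + ∑ x, (-(c x)) • F (zc x)
      rw [one_smul]
      simp only [neg_smul]
      rw [Finset.sum_neg_distrib]
    have hFz : F z = ∑ x, c x • F (zc x) := by
      have := eq_neg_of_add_eq_zero_left hvsum'
      simpa using this
    rw [Tapp y]
    exact hFz.symm
  -- T is an isometry
  have hTnorm : ∀ y : V, ‖T y‖ = ‖y‖ := by
    intro y
    have hg := gram_sum_eq (fun x => F (zc x)) (fun x => G (zc x)) (fun x => B.repr y x)
      (fun i j => hgram (zc i) (hzcΩ i) (zc j) (hzcΩ j))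
    rw [← Tapp y, ← keyrep y] at hg
    have h3 : ‖T y‖ ^ 2 = ‖(y : EuclideanSpace ℂ (Fin N))‖ ^ 2 := by
      rw [← inner_self_eq_norm_sq (𝕜 := ℂ), ← inner_self_eq_norm_sq (𝕜 := ℂ), hg]
    have h4 : ‖T y‖ = ‖(y : EuclideanSpace ℂ (Fin N))‖ := by
      rw [← sq_eq_sq₀ (norm_nonneg _) (norm_nonneg _)]
      exact h3
    rw [h4]
    rfl
  set Tiso : V →ₗᵢ[ℂ] EuclideanSpace ℂ (Fin N) := ⟨T, hTnorm⟩ with hTiso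
  set U0 : EuclideanSpace ℂ (Fin N) →ₗᵢ[ℂ] EuclideanSpace ℂ (Fin N) := Tiso.extend with hU0
  refine ⟨U0.toLinearIsometryEquiv rfl, ?_⟩
  intro z hz
  have h1 : U0 ((⟨G z, hGmem z hz⟩ : V) : EuclideanSpace ℂ (Fin N)) = Tiso ⟨G z, hGmem z hz⟩ :=
    Tiso.extend_apply ⟨G z, hGmem z hz⟩
  have h2 : Tiso ⟨G z, hGmem z hz⟩ = F z := WD z hz
  rw [LinearIsometry.toLinearIsometryEquiv_apply]
  exact (h1.trans h2).symm

end DAngeloAux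

/-- D'Angelo: two holomorphic maps on a connected open set containing `0`
with equal squared norms differ by a unitary transformation of `ℂᴺ`. -/
theorem stmt3 {n N : ℕ} (Ω : Set (EuclideanSpace ℂ (Fin n)))
    (hΩopen : IsOpen Ω) (hΩconn : IsConnected Ω) (hΩ0 : (0 : EuclideanSpace ℂ (Fin n)) ∈ Ω)
    (F G : EuclideanSpace ℂ (Fin n) → EuclideanSpace ℂ (Fin N))
    (hF : DifferentiableOn ℂ F Ω) (hG : DifferentiableOn ℂ G Ω)
    (hnorm : ∀ z ∈ Ω, ‖F z‖ ^ 2 = ‖G z‖ ^ 2) :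
    ∃ U : EuclideanSpace ℂ (Fin N) ≃ₗᵢ[ℂ] EuclideanSpace ℂ (Fin N),
      ∀ z ∈ Ω, F z = U (G z) := by
  exact exists_isometry_of_gram F G (gram_eq hΩopen hΩconn hF hG hnorm)
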